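/- Polynomial kernel mean embeddings match iff moments match: Let x₁, …, x_m and y₁, …, y_n be points in ℝ^p and d ≥ 1 an integer. Then (1/m) Σᵢ (⟨xᵢ, z⟩ + 1)^d = (1/n) Σⱼ (⟨yⱼ, z⟩ + 1)^d holds for all z ∈ ℝ^p if and only if for every multi-index α ∈ ℕ^p with |α| ≤ d the empirical moments coincide: (1/m) Σᵢ xᵢ^α = (1/n) Σⱼ yⱼ^α (where xᵢ^α denotes the product of the coordinates of xᵢ raised to the powers α). -/

import Mathlib

open MvPolynomial Finset

private lemma lin_pow_coeff {p : ℕ} (f : Fin p → ℝ) (t : ℕ) (α : Fin p → ℕ) :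
    MvPolynomial.coeff (Finsupp.equivFunOnFinite.symm α)
      ((∑ k, MvPolynomial.C (f k) * MvPolynomial.X k) ^ t)
    = if (∑ k, α k) = t then (Nat.multinomial Finset.univ α : ℝ) * ∏ k, f k ^ α k else 0 := by
  classical
  rw [Finset.sum_pow_eq_sum_piAntidiag, MvPolynomial.coeff_sum]
  have h1 : ∀ β ∈ Finset.piAntidiag (Finset.univ : Finset (Fin p)) t,
      MvPolynomial.coeff (Finsupp.equivFunOnFinite.symm α)
        ((Nat.multinomial Finset.univ β : MvPolynomial (Fin p) ℝ) *
          ∏ k, (MvPolynomial.C (f k) * MvPolynomial.X k) ^ (β k))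
      = if β = α then (Nat.multinomial Finset.univ β : ℝ) * ∏ k, f k ^ β k else 0 := by
    intro β _
    have hmono : (Nat.multinomial Finset.univ β : MvPolynomial (Fin p) ℝ) *
          ∏ k, (MvPolynomial.C (f k) * MvPolynomial.X k) ^ (β k)
        = MvPolynomial.monomial (Finsupp.equivFunOnFinite.symm β)
            ((Nat.multinomial Finset.univ β : ℝ) * ∏ k, f k ^ β k) := by
      rw [MvPolynomial.monomial_eq]
      simp_rw [mul_pow, Finset.prod_mul_distrib, ← MvPolynomial.C_pow, ← map_prod]
      rw [Finsupp.prod_pow]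
      simp only [Finsupp.coe_equivFunOnFinite_symm,
        ← map_natCast (MvPolynomial.C : ℝ →+* MvPolynomial (Fin p) ℝ)]
      rw [map_mul, mul_assoc]
    rw [hmono, MvPolynomial.coeff_monomial]
    congr 1
    simp [Finsupp.equivFunOnFinite.symm.injective.eq_iff, eq_iff_iff]
  rw [Finset.sum_congr rfl h1, Finset.sum_ite_eq' (Finset.piAntidiag Finset.univ t) α
    (fun β => (Nat.multinomial Finset.univ β : ℝ) * ∏ k, f k ^ β k)]
  simp [Finset.mem_piAntidiag]

private lemma kernel_coeff {p : ℕ} (d : ℕ) (f : Fin p → ℝ) (α : Fin p → ℕ) :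
    MvPolynomial.coeff (Finsupp.equivFunOnFinite.symm α)
      (((∑ k, MvPolynomial.C (f k) * MvPolynomial.X k) + 1) ^ d)
    = (if (∑ k, α k) ≤ d then ((d.choose (∑ k, α k)) * Nat.multinomial Finset.univ α : ℝ) else 0)
        * ∏ k, f k ^ α k := by
  classical
  rw [add_pow, MvPolynomial.coeff_sum]
  have h1 : ∀ t ∈ Finset.range (d+1),
      MvPolynomial.coeff (Finsupp.equivFunOnFinite.symm α)
        ((∑ k, MvPolynomial.C (f k) * MvPolynomial.X k) ^ t * 1 ^ (d - t)
          * (d.choose t : MvPolynomial (Fin p) ℝ))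
      = if t = ∑ k, α k then
          ((d.choose t) * Nat.multinomial Finset.univ α : ℝ) * ∏ k, f k ^ α k else 0 := by
    intro t _
    rw [one_pow, mul_one, ← map_natCast (MvPolynomial.C : ℝ →+* MvPolynomial (Fin p) ℝ),
      mul_comm, MvPolynomial.coeff_C_mul, lin_pow_coeff]
    by_cases h : (∑ k, α k) = t
    · subst h
      simp [mul_comm, mul_assoc, mul_left_comm]
    · simp [h, Ne.symm h]
  rw [Finset.sum_congr rfl h1, Finset.sum_ite_eq' (Finset.range (d+1)) (∑ k, α k)
    (fun t => ((d.choose t) * Nat.multinomial Finset.univ α : ℝ) * ∏ k, f k ^ α k)]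
  simp only [Finset.mem_range, Nat.lt_succ_iff]
  by_cases h : (∑ k, α k) ≤ d <;> simp [h, mul_assoc]

/-- Polynomial kernel mean embeddings match iff empirical moments up to degree `d` match:
for samples `x₁, …, x_m` and `y₁, …, y_n` in `ℝ^p`,
`(1/m) Σᵢ (⟨xᵢ, z⟩ + 1)^d = (1/n) Σⱼ (⟨yⱼ, z⟩ + 1)^d` for all `z` iff all empirical moments
of multi-degree `|α| ≤ d` coincide. -/
theorem polynomial_kernel_mean_embedding_moments
    (p : ℕ) (m n : ℕ) (hm : 0 < m) (hn : 0 < n) (d : ℕ) (hd : 1 ≤ d)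
    (x : Fin m → (Fin p → ℝ)) (y : Fin n → (Fin p → ℝ)) :
    (∀ z : Fin p → ℝ,
        (1 / m : ℝ) * ∑ i, ((∑ k, x i k * z k) + 1) ^ d
          = (1 / n : ℝ) * ∑ j, ((∑ k, y j k * z k) + 1) ^ d)
      ↔ (∀ α : Fin p → ℕ, (∑ k, α k) ≤ d →
        (1 / m : ℝ) * ∑ i, ∏ k, x i k ^ α k
          = (1 / n : ℝ) * ∑ j, ∏ k, y j k ^ α k) := by

  classical
  set A : MvPolynomial (Fin p) ℝ :=
    MvPolynomial.C (1 / m : ℝ) * ∑ i, ((∑ k, MvPolynomial.C (x i k) * MvPolynomial.X k) + 1) ^ d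
    with hA
  set B : MvPolynomial (Fin p) ℝ :=
    MvPolynomial.C (1 / n : ℝ) * ∑ j, ((∑ k, MvPolynomial.C (y j k) * MvPolynomial.X k) + 1) ^ d
    with hB
  have hevalA : ∀ z : Fin p → ℝ,
      MvPolynomial.eval z A = (1 / m : ℝ) * ∑ i, ((∑ k, x i k * z k) + 1) ^ d := by
    intro z; simp [hA]
  have hevalB : ∀ z : Fin p → ℝ,
      MvPolynomial.eval z B = (1 / n : ℝ) * ∑ j, ((∑ k, y j k * z k) + 1) ^ d := by
    intro z; simp [hB]
  have hcoeffA : ∀ α : Fin p → ℕ,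
      MvPolynomial.coeff (Finsupp.equivFunOnFinite.symm α) A
      = (if (∑ k, α k) ≤ d then ((d.choose (∑ k, α k)) * Nat.multinomial Finset.univ α : ℝ)
          else 0) * ((1 / m : ℝ) * ∑ i, ∏ k, x i k ^ α k) := by
    intro α
    rw [hA, MvPolynomial.coeff_C_mul, MvPolynomial.coeff_sum]
    simp_rw [kernel_coeff]
    rw [← Finset.mul_sum]
    ring
  have hcoeffB : ∀ α : Fin p → ℕ,
      MvPolynomial.coeff (Finsupp.equivFunOnFinite.symm α) B
      = (if (∑ k, α k) ≤ d then ((d.choose (∑ k, α k)) * Nat.multinomial Finset.univ α : ℝ)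
          else 0) * ((1 / n : ℝ) * ∑ j, ∏ k, y j k ^ α k) := by
    intro α
    rw [hB, MvPolynomial.coeff_C_mul, MvPolynomial.coeff_sum]
    simp_rw [kernel_coeff]
    rw [← Finset.mul_sum]
    ring
  constructor
  · intro h α hα
    have hAB : A = B := MvPolynomial.funext (fun z => by rw [hevalA, hevalB]; exact h z)
    have := (hcoeffA α).symm.trans ((congrArg (MvPolynomial.coeff _) hAB).trans (hcoeffB α))
    rw [if_pos hα] at this
    have hc : ((d.choose (∑ k, α k)) * Nat.multinomial Finset.univ α : ℝ) ≠ 0 := by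
      have h1 := Nat.choose_pos hα
      have h2 := Nat.multinomial_pos (Finset.univ : Finset (Fin p)) α
      positivity
    exact mul_left_cancel₀ hc this
  · intro h z
    rw [← hevalA, ← hevalB]
    congr 1
    apply MvPolynomial.ext
    intro α'
    have hα' : α' = Finsupp.equivFunOnFinite.symm (Finsupp.equivFunOnFinite α') :=
      (Equiv.symm_apply_apply _ _).symm
    rw [hα', hcoeffA, hcoeffB]
    by_cases hle : (∑ k, Finsupp.equivFunOnFinite α' k) ≤ d
    · rw [h _ hle]
    · rw [if_neg hle, zero_mul, zero_mul]
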